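/- If every subgroup of a Hausdorff topological group G is locally pseudocompact (with the subspace topology), then G is discrete. -/

import Mathlib

/-- A topological space is *pseudocompact* if every continuous real-valued function
on it is bounded. -/
def Pseudocompact (X : Type*) [TopologicalSpace X] : Prop :=
  ∀ f : X → ℝ, Continuous f → ∃ M : ℝ, ∀ x : X, |f x| ≤ M

/-- A topological group is *locally pseudocompact* if some neighborhood of the identity
has pseudocompact closure. -/
def LocallyPseudocompact (G : Type*) [Group G] [TopologicalSpace G] : Prop :=
  ∃ U ∈ nhds (1 : G), Pseudocompact (closure U)

open Filter Set Topology
open scoped Pointwise Uniformity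

section Aux

variable {G : Type*} [Group G] [TopologicalSpace G] [IsTopologicalGroup G]

lemma exists_symm_sq {s : Set G} (hs : s ∈ 𝓝 (1 : G)) :
    ∃ t : Set G, t ∈ 𝓝 (1 : G) ∧ t⁻¹ = t ∧ t * t ⊆ s := by
  rcases exists_nhds_one_split hs with ⟨V, hV, hmul⟩
  refine ⟨V ∩ V⁻¹, Filter.inter_mem hV (by simpa using inv_mem_nhds_one G hV), ?_, ?_⟩
  · simp [Set.inter_inv, Set.inter_comm]
  · rintro x ⟨a, ⟨ha, -⟩, b, ⟨hb, -⟩, rfl⟩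
    exact hmul a ha b hb

/-- Bump functions exist on topological groups: given `U ∈ 𝓝 1` there is a continuous
real function equal to `1` at `1`, with values in `[0,1]`, vanishing outside `U`. -/
lemma exists_bump_one {U : Set G} (hU : U ∈ 𝓝 (1 : G)) :
    ∃ f : G → ℝ, Continuous f ∧ f 1 = 1 ∧ (∀ x, 0 ≤ f x) ∧ (∀ x, f x ≤ 1) ∧
      ∀ x, x ∉ U → f x = 0 := by
  classical
  -- a chain of symmetric neighborhoods
  let T := {s : Set G // s ∈ 𝓝 (1 : G) ∧ s⁻¹ = s}
  have next : ∀ t : T, ∃ t' : T, t'.1 * t'.1 ⊆ t.1 := by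
    intro t
    rcases exists_symm_sq t.2.1 with ⟨u, hu1, hu2, hu3⟩
    exact ⟨⟨u, hu1, hu2⟩, hu3⟩
  obtain ⟨V0, hV01, hV02, hV03⟩ := exists_symm_sq hU
  let V : ℕ → T := fun n => Nat.rec ⟨V0, hV01, hV02⟩ (fun _ p => (next p).choose) n
  have hVmem : ∀ n, (V n).1 ∈ 𝓝 (1 : G) := fun n => (V n).2.1
  have hVsymm : ∀ n, ((V n).1)⁻¹ = (V n).1 := fun n => (V n).2.2
  have hVsq : ∀ n, (V (n + 1)).1 * (V (n + 1)).1 ⊆ (V n).1 := fun n => (next (V n)).choose_spec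
  have hone : ∀ n, (1 : G) ∈ (V n).1 := fun n => mem_of_mem_nhds (hVmem n)
  have hVstep : ∀ n, (V (n + 1)).1 ⊆ (V n).1 := by
    intro n x hx
    have : x * 1 ∈ (V (n+1)).1 * (V (n+1)).1 := Set.mul_mem_mul hx (hone (n+1))
    simpa using hVsq n this
  have hVanti : ∀ m n, m ≤ n → (V n).1 ⊆ (V m).1 := by
    intro m n h
    induction n with
    | zero => simp_all
    | succ k ih =>
      rcases Nat.lt_or_ge m (k+1) with h' | h'
      · exact (hVstep k).trans (ih (Nat.lt_succ_iff.mp h'))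
      · have : m = k + 1 := le_antisymm h h'
        subst this; exact subset_rfl
  have hV0U : (V 0).1 ⊆ U := by
    intro x hx
    have : x * 1 ∈ (V 0).1 * (V 0).1 := Set.mul_mem_mul hx (hone 0)
    simpa using hV03 this
  -- entourages
  let E : ℕ → Set (G × G) := fun n => {p : G × G | p.2 * p.1⁻¹ ∈ (V n).1}
  have hEanti : ∀ m n, m ≤ n → E n ⊆ E m := fun m n h p hp => hVanti m n h hp
  let F : Filter (G × G) := ⨅ n, 𝓟 (E n)
  have hdir : Directed (· ≥ ·) fun n => 𝓟 (E n) := by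
    intro m n
    exact ⟨max m n, principal_mono.2 (hEanti m _ (le_max_left _ _)),
      principal_mono.2 (hEanti n _ (le_max_right _ _))⟩
  have hbF : F.HasBasis (fun _ => True) E :=
    hasBasis_iInf_principal (fun m n => ⟨max m n, hEanti m _ (le_max_left _ _),
      hEanti n _ (le_max_right _ _)⟩)
  have hEmem : ∀ n, E n ∈ F := fun n => hbF.mem_of_mem trivial
  -- the uniform space core
  have refl : ∀ r ∈ F, ∀ x : G, (x, x) ∈ r := by
    intro r hr x
    rcases hbF.mem_iff.mp hr with ⟨n, -, hn⟩
    exact hn (by simpa [E] using hone n)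
  have symm : ∀ r ∈ F, Prod.swap ⁻¹' r ∈ F := by
    intro r hr
    rcases hbF.mem_iff.mp hr with ⟨n, -, hn⟩
    refine mem_of_superset (hEmem n) ?_
    rintro ⟨x, y⟩ hxy
    refine hn ?_
    show x * y⁻¹ ∈ (V n).1
    rw [← hVsymm n]
    simpa [E] using hxy
  have comp : ∀ r ∈ F, ∃ t ∈ F, SetRel.comp t t ⊆ r := by
    intro r hr
    rcases hbF.mem_iff.mp hr with ⟨n, -, hn⟩
    refine ⟨E (n + 1), hEmem (n + 1), ?_⟩
    rintro ⟨x, z⟩ ⟨y, hxy, hyz⟩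
    refine hn ?_
    show z * x⁻¹ ∈ (V n).1
    have : (z * y⁻¹) * (y * x⁻¹) ∈ (V (n+1)).1 * (V (n+1)).1 := Set.mul_mem_mul hyz hxy
    simpa [mul_assoc] using hVsq n this
  let core : UniformSpace.Core G := UniformSpace.Core.mk' F refl symm comp
  let us : UniformSpace G := UniformSpace.ofCore core
  have hcg : @Filter.IsCountablyGenerated _ (@uniformity G us) := hbF.isCountablyGenerated
  obtain ⟨I, hI⟩ := @UniformSpace.metrizable_uniformity G us hcg
  -- distance facts
  let d : G → G → ℝ := @dist G I.toDist
  have huF : @uniformity G I.toUniformSpace = F := by rw [hI]; rfl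
  have hmb : (@uniformity G I.toUniformSpace).HasBasis (fun ε : ℝ => 0 < ε)
      (fun ε => {p : G × G | d p.1 p.2 < ε}) := @Metric.uniformity_basis_dist G I
  have key1 : ∀ ε : ℝ, 0 < ε → ∃ n, ∀ p : G × G, p ∈ E n → d p.1 p.2 < ε := by
    intro ε hε
    have : {p : G × G | d p.1 p.2 < ε} ∈ F := by
      rw [← huF]; exact hmb.mem_of_mem hε
    rcases hbF.mem_iff.mp this with ⟨n, -, hn⟩
    exact ⟨n, fun p hp => hn hp⟩
  have key2 : ∃ ε : ℝ, 0 < ε ∧ ∀ p : G × G, d p.1 p.2 < ε → p ∈ E 0 := by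
    have : E 0 ∈ @uniformity G I.toUniformSpace := by rw [huF]; exact hEmem 0
    rcases hmb.mem_iff.mp this with ⟨ε, hε, hsub⟩
    exact ⟨ε, hε, fun p hp => hsub hp⟩
  obtain ⟨ε, hε, hball⟩ := key2
  -- the function
  have hd_nonneg : ∀ x y, 0 ≤ d x y := fun x y => @dist_nonneg G I x y
  have hd_self : ∀ x, d x x = 0 := fun x => @dist_self G I x
  have hd_comm : ∀ x y, d x y = d y x := fun x y => @dist_comm G I x y
  have hd_tri : ∀ x y z, d x z ≤ d x y + d y z := fun x y z => @dist_triangle G I x y z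
  have hφcont : Continuous fun x : G => d 1 x := by
    rw [continuous_iff_continuousAt]
    intro x
    rw [ContinuousAt, Metric.tendsto_nhds]
    intro δ hδ
    rcases key1 δ hδ with ⟨n, hn⟩
    have hmem : (· * x) '' (V n).1 ∈ 𝓝 x := by
      rw [← map_mul_right_nhds_one x]
      exact image_mem_map (hVmem n)
    filter_upwards [hmem]
    rintro y ⟨v, hv, rfl⟩
    have hxy : d x (v * x) < δ := hn (x, v * x) (by simpa [E] using hv)
    have h1 : d 1 (v * x) ≤ d 1 x + d x (v * x) := hd_tri _ _ _
    have h2 : d 1 x ≤ d 1 (v * x) + d x (v * x) := by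
      have := hd_tri 1 (v * x) x
      rwa [hd_comm (v*x) x] at this
    have : |d 1 (v * x) - d 1 x| < δ := by
      rw [abs_sub_lt_iff]; constructor <;> linarith
    simpa [Real.dist_eq]
  refine ⟨fun x => max 0 (1 - d 1 x / ε), ?_, ?_, ?_, ?_, ?_⟩
  · exact continuous_const.max (continuous_const.sub (hφcont.div_const ε))
  · simp [hd_self 1, hε.le]
  · intro x; exact le_max_left _ _
  · intro x
    have h0 : 0 ≤ d 1 x / ε := div_nonneg (hd_nonneg 1 x) hε.le
    exact max_le (by norm_num) (by linarith)
  · intro x hx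
    have hx0 : x ∉ (V 0).1 := fun h => hx (hV0U h)
    have : ¬ d 1 x < ε := by
      intro h
      exact hx0 (by simpa [E] using hball (1, x) h)
    have : ε ≤ d 1 x := not_lt.mp this
    have : 1 - d 1 x / ε ≤ 0 := by
      have : 1 ≤ d 1 x / ε := (one_le_div hε).mpr this
      linarith
    exact max_eq_left this

lemma exists_bump_at (p : G) {O : Set G} (hO : IsOpen O) (hp : p ∈ O) :
    ∃ f : G → ℝ, Continuous f ∧ f p = 1 ∧ (∀ x, 0 ≤ f x) ∧ (∀ x, f x ≤ 1) ∧
      ∀ x, x ∉ O → f x = 0 := by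
  have hU : (fun x : G => p * x) ⁻¹' O ∈ 𝓝 (1 : G) := by
    refine (hO.preimage (continuous_mul_left p)).mem_nhds ?_
    simp [hp]
  obtain ⟨g, hgc, hg1, hg0, hgle, hgsupp⟩ := exists_bump_one hU
  refine ⟨fun x => g (p⁻¹ * x), hgc.comp (continuous_mul_left p⁻¹), by simpa using hg1,
    fun x => hg0 _, fun x => hgle _, fun x hx => hgsupp _ ?_⟩
  simp [hx]

lemma pseudocompact_of_surj {Y Z : Type*} [TopologicalSpace Y] [TopologicalSpace Z]
    {g : Y → Z} (hgc : Continuous g) (hgs : Function.Surjective g)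
    (hP : Pseudocompact Y) : Pseudocompact Z := by
  intro f hf
  obtain ⟨M, hM⟩ := hP (f ∘ g) (hf.comp hgc)
  refine ⟨M, fun z => ?_⟩
  obtain ⟨y, rfl⟩ := hgs z
  exact hM y

lemma not_pseudocompact_of_unbounded' {X : Type*} [TopologicalSpace X] {s : Set X}
    {f : X → ℝ} (hf : Continuous f) (pts : ℕ → X) (hpts : ∀ n, pts n ∈ s)
    (hval : ∀ n, f (pts n) = n) : ¬ Pseudocompact s := by
  intro hP
  obtain ⟨M, hM⟩ := hP (fun x => f x.1) (hf.comp continuous_subtype_val)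
  have h1 := hM ⟨pts (⌊M⌋₊ + 1), hpts _⟩
  rw [hval] at h1
  have h2 : ((⌊M⌋₊ + 1 : ℕ) : ℝ) ≤ M := (le_abs_self _).trans h1
  exact absurd h2 (not_le.mpr (by exact_mod_cast Nat.lt_floor_add_one M))

/-- A set with pseudocompact closure in a topological group is totally bounded. -/
lemma exists_finite_cover {s : Set G} (hP : Pseudocompact (closure s))
    {V : Set G} (hV : V ∈ 𝓝 (1 : G)) :
    ∃ F : Finset G, ∀ x ∈ s, ∃ a ∈ F, a⁻¹ * x ∈ V := by
  classical
  have hV₀mem : V ∩ V⁻¹ ∈ 𝓝 (1 : G) :=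
    Filter.inter_mem hV (by simpa using inv_mem_nhds_one G hV)
  have hV₀symm : (V ∩ V⁻¹)⁻¹ = V ∩ V⁻¹ := by simp [Set.inter_inv, Set.inter_comm]
  set V₀ := V ∩ V⁻¹ with hV₀def
  suffices h : ∃ F : Finset G, ∀ x ∈ s, ∃ a ∈ F, a⁻¹ * x ∈ V₀ by
    obtain ⟨F, hF⟩ := h
    exact ⟨F, fun x hx => by obtain ⟨a, haF, ha⟩ := hF x hx; exact ⟨a, haF, ha.1⟩⟩
  by_contra hno
  push_neg at hno
  obtain ⟨W1, hW1mem, hW1symm, hW1sq⟩ := exists_symm_sq hV₀mem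
  obtain ⟨W, hWmem, hWsymm, hWsq⟩ := exists_symm_sq hW1mem
  have h1W : (1 : G) ∈ W := mem_of_mem_nhds hWmem
  have hW4 : ∀ w1 w2 w3 w4 : G, w1 ∈ W → w2 ∈ W → w3 ∈ W → w4 ∈ W →
      w1 * w2 * w3 * w4 ∈ V₀ := by
    intro w1 w2 w3 w4 h1 h2 h3 h4
    have ha : w1 * w2 ∈ W1 := hWsq (Set.mul_mem_mul h1 h2)
    have hb : w3 * w4 ∈ W1 := hWsq (Set.mul_mem_mul h3 h4)
    have := hW1sq (Set.mul_mem_mul ha hb)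
    simpa [mul_assoc] using this
  have hWV : W ⊆ V₀ := by
    intro w hw
    have := hW4 w 1 1 1 hw h1W h1W h1W
    simpa using this
  have hWinv : ∀ w : G, w ∈ W → w⁻¹ ∈ W := by
    intro w hw; rw [← hWsymm]; simpa using hw
  -- the separated sequence
  let next : Finset G → G := fun F => (hno F).choose
  have hnext_mem : ∀ F, next F ∈ s := fun F => (hno F).choose_spec.1
  have hnext_sep : ∀ F, ∀ a ∈ F, (a⁻¹ * next F) ∉ V₀ := fun F => (hno F).choose_spec.2
  let seq : ℕ → G × Finset G := fun n =>
    Nat.rec (next ∅, {next ∅}) (fun _ p => (next p.2, insert (next p.2) p.2)) n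
  let a : ℕ → G := fun n => (seq n).1
  have ha_mem : ∀ n, a n ∈ s := by
    intro n
    cases n with
    | zero => exact hnext_mem ∅
    | succ k => exact hnext_mem (seq k).2
  have hmem_seq : ∀ m n, m ≤ n → a m ∈ (seq n).2 := by
    intro m n h
    induction n with
    | zero =>
      rw [Nat.le_zero.mp h]
      exact Finset.mem_singleton_self _
    | succ k ih =>
      rcases Nat.lt_or_ge m (k+1) with h' | h'
      · exact Finset.mem_insert_of_mem (ih (Nat.lt_succ_iff.mp h'))
      · rw [le_antisymm h h']
        exact Finset.mem_insert_self _ _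
  have hsep : ∀ m n, m < n → (a m)⁻¹ * a n ∉ V₀ := by
    intro m n h
    cases n with
    | zero => omega
    | succ k => exact hnext_sep (seq k).2 (a m) (hmem_seq m k (Nat.lt_succ_iff.mp h))
  have hsep' : ∀ m n, m ≠ n → (a m)⁻¹ * a n ∉ V₀ := by
    intro m n hmn hmem
    rcases Nat.lt_or_ge m n with h | h
    · exact hsep m n h hmem
    · have h' : n < m := lt_of_le_of_ne h (Ne.symm hmn)
      refine hsep n m h' ?_
      rw [← hV₀symm]
      simpa [mul_inv_rev] using hmem
  -- bumps at the `a n`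
  have h1intW : (1 : G) ∈ interior W := mem_interior_iff_mem_nhds.mpr hWmem
  have hBo : ∀ n : ℕ, IsOpen ((fun x => (a n)⁻¹ * x) ⁻¹' interior W) := fun n =>
    isOpen_interior.preimage (continuous_mul_left _)
  have hBa : ∀ n : ℕ, a n ∈ (fun x => (a n)⁻¹ * x) ⁻¹' interior W := by
    intro n; simp [h1intW]
  choose φ hφc hφpt hφ0 hφle hφsupp using fun n => exists_bump_at (a n) (hBo n) (hBa n)
  have hsupp' : ∀ (n : ℕ) (x : G), φ n x ≠ 0 → (a n)⁻¹ * x ∈ W := by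
    intro n x hx
    by_contra hmem
    exact hx (hφsupp n x fun hm => hmem (interior_subset hm))
  have hkey : ∀ (x : G) (m n : ℕ) (y y' : G), x⁻¹ * y ∈ W → x⁻¹ * y' ∈ W →
      (a m)⁻¹ * y ∈ W → (a n)⁻¹ * y' ∈ W → m = n := by
    intro x m n y y' h1 h2 h3 h4
    by_contra hmn
    refine hsep' m n hmn ?_
    have heq : (a m)⁻¹ * a n =
        ((a m)⁻¹ * y) * (x⁻¹ * y)⁻¹ * (x⁻¹ * y') * ((a n)⁻¹ * y')⁻¹ := by
      group
    rw [heq]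
    exact hW4 _ _ _ _ h3 (hWinv _ h1) h2 (hWinv _ h4)
  set f : G → ℝ := fun x => ∑' (n : ℕ), (n : ℝ) * φ n x with hfdef
  have hfc : Continuous f := by
    rw [continuous_iff_continuousAt]
    intro x
    have hN : (fun y => x⁻¹ * y) ⁻¹' W ∈ 𝓝 x := by
      refine ContinuousAt.preimage_mem_nhds (continuous_mul_left x⁻¹).continuousAt ?_
      simpa using hWmem
    by_cases hex : ∃ (n : ℕ) (y : G), x⁻¹ * y ∈ W ∧ (a n)⁻¹ * y ∈ W
    · obtain ⟨n₀, y₀, hy₀1, hy₀2⟩ := hex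
      have heq : (fun y => (n₀ : ℝ) * φ n₀ y) =ᶠ[𝓝 x] f := by
        refine eventually_of_mem hN fun y hy => ?_
        have : f y = (n₀ : ℝ) * φ n₀ y := by
          refine tsum_eq_single n₀ ?_
          intro m hm
          rcases eq_or_ne (φ m y) 0 with h0 | h0
          · rw [h0]; ring
          · exact absurd (hkey x m n₀ y y₀ hy hy₀1 (hsupp' m y h0) hy₀2) hm
        exact this.symm
      exact ((continuous_const.mul (hφc n₀)).continuousAt).congr heq
    · push_neg at hex
      have heq : (fun _ : G => (0 : ℝ)) =ᶠ[𝓝 x] f := by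
        refine eventually_of_mem hN fun y hy => ?_
        have : f y = ((0:ℕ) : ℝ) * φ 0 y := by
          refine tsum_eq_single 0 ?_
          intro m hm
          rcases eq_or_ne (φ m y) 0 with h0 | h0
          · rw [h0]; ring
          · exact absurd (hsupp' m y h0) (hex m y hy)
        rw [this]; ring
      exact continuousAt_const.congr heq
  have hval : ∀ n : ℕ, f (a n) = n := by
    intro n
    have : f (a n) = (n : ℝ) * φ n (a n) := by
      refine tsum_eq_single n ?_
      intro m hm
      rcases eq_or_ne (φ m (a n)) 0 with h0 | h0
      · rw [h0]; ring
      · exact absurd (hWV (hsupp' m (a n) h0)) (hsep' m n hm)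
    rw [this, hφpt, mul_one]
  exact not_pseudocompact_of_unbounded' hfc a (fun n => subset_closure (ha_mem n)) hval hP

end Aux

lemma countable_subgroup_closure {G : Type*} [Group G] {D : Set G} (hD : D.Countable) :
    ((Subgroup.closure D : Subgroup G) : Set G).Countable := by
  classical
  have hDinv : (D⁻¹ : Set G).Countable := by
    have h : (D⁻¹ : Set G) = Inv.inv ⁻¹' D := rfl
    rw [h]; exact hD.preimage inv_injective
  have hcnt : (D ∪ D⁻¹ : Set G).Countable := hD.union hDinv
  have : Countable ↥(D ∪ D⁻¹ : Set G) := hcnt.to_subtype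
  have hsub : ((Subgroup.closure D : Subgroup G) : Set G) ⊆
      Set.range (fun l : List ↥(D ∪ D⁻¹ : Set G) => (l.map Subtype.val).prod) := by
    intro x hx
    have hx' : x ∈ Submonoid.closure (D ∪ D⁻¹) := by
      rw [← Subgroup.closure_toSubmonoid]
      exact hx
    obtain ⟨l, hl, rfl⟩ := Submonoid.exists_list_of_mem_closure hx'
    refine ⟨l.attach.map (fun y => (⟨y.1, hl y.1 y.2⟩ : ↥(D ∪ D⁻¹ : Set G))), ?_⟩
    simp only [List.map_map]
    congr 1
    rw [show (Subtype.val ∘ fun y : {x // x ∈ l} =>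
      (⟨y.1, hl y.1 y.2⟩ : ↥(D ∪ D⁻¹ : Set G))) = Subtype.val from rfl]
    exact List.attach_map_subtype_val l
  exact (Set.countable_range _).mono hsub

lemma isOpen_one_of_countable {X : Type*} [Group X] [TopologicalSpace X] [IsTopologicalGroup X]
    [T2Space X] [Countable X] {U : Set X} (hU : U ∈ 𝓝 (1 : X))
    (hP : Pseudocompact (closure U)) : IsOpen ({1} : Set X) := by
  classical
  by_contra hnot
  have hsingle : ∀ x : X, ¬ IsOpen ({x} : Set X) := by
    intro x hx
    refine hnot ?_
    have h1 : ({1} : Set X) = (fun y : X => x * y) ⁻¹' {x} := by ext y; simp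
    rw [h1]; exact hx.preimage (continuous_mul_left x)
  have hopen_inf : ∀ W : Set X, IsOpen W → W.Nonempty → W.Infinite := by
    intro W hWo ⟨x, hx⟩
    by_contra hfin
    rw [Set.not_infinite] at hfin
    refine hsingle x ?_
    have h1 : ({x} : Set X) = W ∩ (W \ {x})ᶜ := by
      ext y
      constructor
      · rintro rfl; exact ⟨hx, fun h => h.2 rfl⟩
      · rintro ⟨hyW, hy⟩
        by_contra hne
        exact hy ⟨hyW, by simpa using hne⟩
    rw [h1]
    exact hWo.inter (hfin.subset diff_subset).isClosed.isOpen_compl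
  set C := closure U with hC
  set O := interior C with hO
  have h1O : (1 : X) ∈ O := mem_interior_iff_mem_nhds.mpr (mem_of_superset hU subset_closure)
  obtain ⟨e, he⟩ := exists_surjective_nat X
  -- the recursive step
  have step : ∀ (n : ℕ) (p : {P : Set X // IsOpen P ∧ P.Nonempty}),
      ∃ r : (Set X × (Set X × X)) × {P : Set X // IsOpen P ∧ P.Nonempty},
        r.1.1 ⊆ p.1 ∧ e n ∉ closure r.1.1 ∧
        IsOpen r.1.2.1 ∧ r.1.2.1 ⊆ r.1.1 ∧ r.1.2.2 ∈ r.1.2.1 ∧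
        r.2.1 ⊆ r.1.1 ∧ closure r.1.2.1 ∩ closure r.2.1 = ∅ := by
    rintro n ⟨P, hPo, hPne⟩
    have hPinf := hopen_inf P hPo hPne
    obtain ⟨y, hy⟩ := (hPinf.diff (finite_singleton (e n))).nonempty
    have hyP : y ∈ P := hy.1
    have hy_ne : y ≠ e n := by simpa using hy.2
    have hopen1 : IsOpen (P \ {e n}) := hPo.sdiff isClosed_singleton
    obtain ⟨g, hgc, hgy, hg0, hgle, hgsupp⟩ := exists_bump_at y hopen1 ⟨hyP, by simpa using hy_ne⟩
    set Q : Set X := {x | (1:ℝ)/2 < g x} with hQdef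
    have hQo : IsOpen Q := isOpen_lt continuous_const hgc
    have hQsub : Q ⊆ P := by
      intro x hx
      by_contra hxP
      have h0 : g x = 0 := hgsupp x (fun h => hxP h.1)
      have : (1:ℝ)/2 < g x := hx
      rw [h0] at this; norm_num at this
    have hyQ : y ∈ Q := by simp only [hQdef, mem_setOf_eq, hgy]; norm_num
    have hQcl : closure Q ⊆ {x | (1:ℝ)/2 ≤ g x} :=
      closure_minimal (fun x hx => show (1:ℝ)/2 ≤ g x from le_of_lt hx)
        (isClosed_le continuous_const hgc)
    have hen : e n ∉ closure Q := by
      intro hx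
      have h1 := hQcl hx
      have h2 : g (e n) = 0 := hgsupp _ (by simp)
      simp only [mem_setOf_eq, h2] at h1; norm_num at h1
    obtain ⟨z', hz'⟩ := ((hopen_inf Q hQo ⟨y, hyQ⟩).diff (finite_singleton y)).nonempty
    have hz'Q : z' ∈ Q := hz'.1
    have hz'ne : z' ≠ y := by simpa using hz'.2
    have hopen2 : IsOpen (Q \ {z'}) := hQo.sdiff isClosed_singleton
    obtain ⟨h, hhc, hhy, hh0, hhle, hhsupp⟩ :=
      exists_bump_at y hopen2 ⟨hyQ, by simpa using hz'ne.symm⟩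
    refine ⟨⟨⟨Q, {x | (2:ℝ)/3 < h x}, y⟩, ⟨Q ∩ {x | h x < (1:ℝ)/3},
      hQo.inter (isOpen_lt hhc continuous_const), ⟨z', hz'Q, ?_⟩⟩⟩,
      hQsub, hen, isOpen_lt continuous_const hhc, ?_, ?_, inter_subset_left, ?_⟩
    · have : h z' = 0 := hhsupp _ (by simp)
      simp only [mem_setOf_eq, this]; norm_num
    · intro x hx
      by_contra hxQ
      have h0 : h x = 0 := hhsupp x (fun hmem => hxQ hmem.1)
      have : (2:ℝ)/3 < h x := hx
      rw [h0] at this; norm_num at this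
    · simp only [mem_setOf_eq, hhy]; norm_num
    · have hcl1 : closure {x | (2:ℝ)/3 < h x} ⊆ {x | (2:ℝ)/3 ≤ h x} :=
        closure_minimal (fun x hx => show (2:ℝ)/3 ≤ h x from le_of_lt hx)
          (isClosed_le continuous_const hhc)
      have hcl2 : closure (Q ∩ {x | h x < (1:ℝ)/3}) ⊆ {x | h x ≤ (1:ℝ)/3} :=
        closure_minimal (fun x hx => show h x ≤ (1:ℝ)/3 from le_of_lt hx.2)
          (isClosed_le hhc continuous_const)
      rw [eq_empty_iff_forall_notMem]
      rintro x ⟨hx1, hx2⟩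
      have := hcl1 hx1
      have := hcl2 hx2
      simp only [mem_setOf_eq] at *
      linarith
  -- the recursion
  let Pseq : ℕ → {P : Set X // IsOpen P ∧ P.Nonempty} := fun n =>
    Nat.rec ⟨O, isOpen_interior, ⟨1, h1O⟩⟩ (fun k p => (step k p).choose.2) n
  let Q : ℕ → Set X := fun n => (step n (Pseq n)).choose.1.1
  let B : ℕ → Set X := fun n => (step n (Pseq n)).choose.1.2.1
  let pt : ℕ → X := fun n => (step n (Pseq n)).choose.1.2.2
  have spec : ∀ n, Q n ⊆ (Pseq n).1 ∧ e n ∉ closure (Q n) ∧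
      IsOpen (B n) ∧ B n ⊆ Q n ∧ pt n ∈ B n ∧
      (Pseq (n+1)).1 ⊆ Q n ∧ closure (B n) ∩ closure (Pseq (n+1)).1 = ∅ := fun n =>
    (step n (Pseq n)).choose_spec
  have hmono : ∀ m n, m ≤ n → (Pseq n).1 ⊆ (Pseq m).1 := by
    intro m n h
    induction n with
    | zero => rw [Nat.le_zero.mp h]
    | succ k ih =>
      rcases Nat.lt_or_ge m (k+1) with h' | h'
      · exact (((spec k).2.2.2.2.2.1).trans (spec k).1).trans (ih (Nat.lt_succ_iff.mp h'))
      · rw [le_antisymm h h']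
  have hBself : ∀ n, B n ⊆ (Pseq n).1 := fun n => (spec n).2.2.2.1.trans (spec n).1
  have hdisj : ∀ m n, m < n → ∀ x, x ∈ B n → x ∉ B m := by
    intro m n h x hxn hxm
    have hx1 : x ∈ closure (B m) := subset_closure hxm
    have hx2 : x ∈ closure (Pseq (m+1)).1 :=
      subset_closure ((hBself n).trans (hmono (m+1) n h) hxn)
    have hempty := (spec m).2.2.2.2.2.2
    exact (eq_empty_iff_forall_notMem.mp hempty x) ⟨hx1, hx2⟩
  -- bumps
  choose φ hφc hφpt hφ0 hφle hφsupp using fun n =>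
    exists_bump_at (pt n) (spec n).2.2.1 (spec n).2.2.2.2.1
  set f : X → ℝ := fun x => ∑' (m : ℕ), (m : ℝ) * φ m x with hfdef
  have hsupport : ∀ j (y : X), y ∉ closure (Q j) → ∀ m, j < m → φ m y = 0 := by
    intro j y hy m hm
    refine hφsupp m y fun hyB => hy (subset_closure ?_)
    exact (spec j).2.2.2.2.2.1 ((hBself m).trans (hmono (j+1) m hm) hyB)
  have hsum : ∀ j (y : X), y ∉ closure (Q j) →
      f y = ∑ m ∈ Finset.range (j+1), (m:ℝ) * φ m y := by
    intro j y hy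
    show (∑' (m : ℕ), (m : ℝ) * φ m y) = _
    refine tsum_eq_sum ?_
    intro m hm
    have hjm : j < m := Nat.lt_of_lt_of_le (Nat.lt_succ_self j) (Nat.not_lt.mp (by simpa using hm))
    rw [hsupport j y hy m hjm]
    ring
  have hfc : Continuous f := by
    rw [continuous_iff_continuousAt]
    intro x
    obtain ⟨j, hj⟩ := he x
    have hxn : x ∉ closure (Q j) := hj ▸ (spec j).2.1
    have hN : (closure (Q j))ᶜ ∈ 𝓝 x := isClosed_closure.isOpen_compl.mem_nhds hxn
    have heq : (fun y => ∑ m ∈ Finset.range (j+1), (m:ℝ) * φ m y) =ᶠ[𝓝 x] f :=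
      eventually_of_mem hN fun y hy => (hsum j y hy).symm
    exact (Continuous.continuousAt (continuous_finset_sum _
      fun m _ => continuous_const.mul (hφc m))).congr heq
  have hval : ∀ n : ℕ, f (pt n) = n := by
    intro n
    have hzero : ∀ m : ℕ, m ≠ n → (m:ℝ) * φ m (pt n) = 0 := by
      intro m hm
      rcases lt_or_gt_of_ne hm with hlt | hgt
      · rw [hφsupp m _ (hdisj m n hlt _ (spec n).2.2.2.2.1)]; ring
      · rw [hφsupp m _ (fun hmem => (hdisj n m hgt _ hmem) (spec n).2.2.2.2.1)]; ring
    have : f (pt n) = (n:ℝ) * φ n (pt n) := tsum_eq_single n hzero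
    rw [this, hφpt n, mul_one]
  have hptC : ∀ n, pt n ∈ closure U := fun n =>
    interior_subset ((hmono 0 n (Nat.zero_le n)) ((hBself n) (spec n).2.2.2.2.1))
  exact not_pseudocompact_of_unbounded' hfc pt hptC hval hP

/-- if every subgroup of a Hausdorff topological group `G` is locally
pseudocompact (with the subspace topology), then `G` is discrete. -/
theorem discrete_of_all_subgroups_locallyPseudocompact {G : Type*} [Group G]
    [TopologicalSpace G] [IsTopologicalGroup G] [T2Space G]
    (hG : ∀ H : Subgroup G, LocallyPseudocompact H) :
    DiscreteTopology G := by
  classical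
  suffices h1 : IsOpen ({1} : Set G) by
    rw [discreteTopology_iff_isOpen_singleton]
    intro g
    have hg : ({g} : Set G) = (fun x : G => g⁻¹ * x) ⁻¹' {1} := by
      ext x
      simp [inv_mul_eq_one, eq_comm]
    rw [hg]
    exact h1.preimage (continuous_mul_left g⁻¹)
  by_contra hnot
  -- transfer the hypothesis for `⊤` to `G`
  obtain ⟨U, hU, hPU⟩ := hG ⊤
  let e : G ≃ₜ (⊤ : Subgroup G) :=
    { toFun := fun g => ⟨g, trivial⟩
      invFun := Subtype.val
      left_inv := fun g => rfl
      right_inv := fun x => rfl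
      continuous_toFun := Continuous.subtype_mk continuous_id _
      continuous_invFun := continuous_subtype_val }
  have he1 : e 1 = 1 := rfl
  set s : Set G := e ⁻¹' U with hsdef
  have hs : s ∈ 𝓝 (1 : G) := by
    refine e.continuous.continuousAt.preimage_mem_nhds ?_
    rw [he1]; exact hU
  have hcs : closure s = e ⁻¹' (closure U) := (e.preimage_closure U).symm
  have hmemcs : ∀ y : ↥(closure U), e.symm y.1 ∈ closure s := by
    intro y
    rw [hcs]
    show e (e.symm y.1) ∈ closure U
    simp only [Homeomorph.apply_symm_apply]
    exact y.2
  have hPs : Pseudocompact (closure s) := by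
    refine pseudocompact_of_surj
      (g := fun y : ↥(closure U) => (⟨e.symm y.1, hmemcs y⟩ : ↥(closure s)))
      (Continuous.subtype_mk (e.symm.continuous.comp continuous_subtype_val) _) ?_ hPU
    rintro ⟨x, hx⟩
    have hx' : e x ∈ closure U := by rw [hcs] at hx; exact hx
    exact ⟨⟨e x, hx'⟩, Subtype.ext (by simp)⟩
  -- every neighborhood of 1 is infinite
  have hinf : ∀ t : Set G, t ∈ 𝓝 (1 : G) → t.Infinite := by
    intro t ht
    by_contra hfin
    rw [Set.not_infinite] at hfin
    obtain ⟨W, hWsub, hWo, hW1⟩ := mem_nhds_iff.mp ht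
    refine hnot ?_
    have h1 : ({1} : Set G) = W ∩ (W \ {1})ᶜ := by
      ext y
      constructor
      · rintro rfl; exact ⟨hW1, fun h => h.2 rfl⟩
      · rintro ⟨hyW, hy⟩
        by_contra hne
        exact hy ⟨hyW, by simpa using hne⟩
    rw [h1]
    exact hWo.inter ((hfin.subset fun x hx => hWsub hx.1).isClosed.isOpen_compl)
  -- a countable infinite subset of `s`
  have hsinf := hinf s hs
  let ρ : ℕ ↪ ↥s := hsinf.natEmbedding s
  let dd : ℕ → G := fun n => (ρ n).1
  let H : Subgroup G := Subgroup.closure (Set.range dd)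
  have hDH : Set.range dd ⊆ (H : Set G) := Subgroup.subset_closure
  have hHc : ((H : Set G)).Countable := countable_subgroup_closure (Set.countable_range _)
  have hHcnt : Countable ↥H := hHc.to_subtype
  obtain ⟨UH, hUH, hPUH⟩ := hG H
  have hopen1 : IsOpen ({1} : Set ↥H) := isOpen_one_of_countable hUH hPUH
  obtain ⟨V, hVo, hVeq⟩ := isOpen_induced_iff.mp hopen1
  have hV1 : (1 : G) ∈ V := by
    have h : (1 : ↥H) ∈ Subtype.val ⁻¹' V := by rw [hVeq]; exact rfl
    exact h
  have hVH : ∀ g : G, g ∈ H → g ∈ V → g = 1 := by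
    intro g hgH hgV
    have h : (⟨g, hgH⟩ : ↥H) ∈ Subtype.val ⁻¹' V := hgV
    rw [hVeq] at h
    exact congrArg Subtype.val (Set.mem_singleton_iff.mp h)
  obtain ⟨W, hWmem, hWsymm, hWsq⟩ := exists_symm_sq (hVo.mem_nhds hV1)
  obtain ⟨F, hF⟩ := exists_finite_cover hPs hWmem
  have hchoice : ∀ n : ℕ, ∃ a : G, a ∈ F ∧ a⁻¹ * dd n ∈ W := by
    intro n
    obtain ⟨a, h1, h2⟩ := hF (dd n) (ρ n).2
    exact ⟨a, h1, h2⟩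
  choose c hcF hcW using hchoice
  have hpigeon : ∃ m n : ℕ, m ≠ n ∧ c m = c n := by
    obtain ⟨m, n, hmn, hc⟩ :=
      Finite.exists_ne_map_eq_of_infinite (fun n : ℕ => (⟨c n, hcF n⟩ : ↥(F : Finset G)))
    exact ⟨m, n, hmn, congrArg Subtype.val hc⟩
  obtain ⟨m, n, hmn, hc⟩ := hpigeon
  have hWV : (dd m)⁻¹ * dd n ∈ V := by
    have h1 := hcW m
    have h2 := hcW n
    rw [hc] at h1
    have heq : (dd m)⁻¹ * dd n = ((c n)⁻¹ * dd m)⁻¹ * ((c n)⁻¹ * dd n) := by group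
    rw [heq]
    refine hWsq (Set.mul_mem_mul ?_ h2)
    rw [← hWsymm]
    simpa using h1
  have hmemH : (dd m)⁻¹ * dd n ∈ H :=
    H.mul_mem (H.inv_mem (hDH ⟨m, rfl⟩)) (hDH ⟨n, rfl⟩)
  have hone := hVH _ hmemH hWV
  have hdd : dd m = dd n := inv_mul_eq_one.mp hone
  exact hmn (ρ.injective (Subtype.val_injective hdd))
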